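/- Let A, G be transitive permutation groups on a finite set Ω with G ⊴ A and A/G cyclic generated by xG. Suppose there is an integer s > 1 such that every element of the coset xG either has no fixed points or has at least s fixed points. Then the proportion of derangements in xG is at least 1 - 1/s ≥ 1/2. -/

import Mathlib

open MulAction
open scoped Classical

/-- if every element of the coset `xG` is either a derangement or has at
least `s > 1` fixed points, then the proportion of derangements in `xG` is at least
`1 - 1/s ≥ 1/2`. -/
theorem derangement_proportion_ge_one_sub_inv
    (A Ω : Type*) [Group A] [Fintype A] [Fintype Ω] [Nonempty Ω] [MulAction A Ω]
    [MulAction.IsPretransitive A Ω]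
    (G : Subgroup A) [G.Normal] [MulAction.IsPretransitive G Ω] (x : A)
    (hgen : ∀ a : A, ∃ k : ℤ,
      (QuotientGroup.mk a : A ⧸ G) = (QuotientGroup.mk x : A ⧸ G) ^ k)
    (s : ℕ) (hs : 1 < s)
    (hfix : ∀ g ∈ G, (∀ ω : Ω, (x * g) • ω ≠ ω) ∨
      s ≤ Set.ncard {ω : Ω | (x * g) • ω = ω}) :
    (1 : ℚ) - 1 / s ≤
        (Set.ncard {a : A | x⁻¹ * a ∈ G ∧ ∀ ω : Ω, a • ω ≠ ω} : ℚ) / Nat.card G ∧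
      (1 : ℚ) / 2 ≤ (1 : ℚ) - 1 / s := by
  have hΩpos : 0 < Fintype.card Ω := Fintype.card_pos
  -- Step 1: for each ω, the number of g ∈ G with (x*g)•ω = ω times |Ω| is |G|
  have step1 : ∀ ω : Ω,
      (Finset.univ.filter (fun g : G => (x * (g : A)) • ω = ω)).card * Fintype.card Ω
        = Fintype.card G := by
    intro ω
    obtain ⟨g₀, hg₀⟩ := MulAction.exists_smul_eq G ω (x⁻¹ • ω)
    have hg₀' : (g₀ : A) • ω = x⁻¹ • ω := hg₀
    have hcard : (Finset.univ.filter (fun g : G => (x * (g : A)) • ω = ω)).card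
        = Fintype.card (stabilizer G ω) := by
      rw [Fintype.card_subtype]
      apply Finset.card_nbij' (fun g => g₀⁻¹ * g) (fun h => g₀ * h)
      · intro g hg
        simp only [Finset.mem_coe, Finset.mem_filter, Finset.mem_univ, true_and] at hg ⊢
        have : (g : A) • ω = x⁻¹ • ω := by
          rw [eq_inv_smul_iff, ← mul_smul]
          exact hg
        rw [mem_stabilizer_iff]
        show ((g₀⁻¹ * g : G) : A) • ω = ω
        push_cast
        rw [mul_smul, this, ← hg₀', inv_smul_smul]
      · intro h hh
        simp only [Finset.mem_coe, Finset.mem_filter, Finset.mem_univ, true_and,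
          mem_stabilizer_iff] at hh ⊢
        have hh' : ((h : G) : A) • ω = ω := hh
        show (x * ((g₀ * h : G) : A)) • ω = ω
        push_cast
        rw [mul_smul, mul_smul, hh', hg₀', smul_inv_smul]
      · intro g _; simp [mul_assoc]
      · intro h _; simp [← mul_assoc]
    rw [hcard, mul_comm]
    have horb : Fintype.card (orbit G ω) = Fintype.card Ω :=
      Fintype.card_congr ((Equiv.setCongr (MulAction.orbit_eq_univ G ω)).trans
        (Equiv.Set.univ Ω))
    rw [← horb]
    exact MulAction.card_orbit_mul_card_stabilizer_eq_card_group G ω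
  -- Step 2: the total fixed-point count over the coset is |G|
  have step2 : ∑ g : G, (Finset.univ.filter (fun ω : Ω => (x * (g : A)) • ω = ω)).card
      = Fintype.card G := by
    have swap : ∑ g : G, (Finset.univ.filter (fun ω : Ω => (x * (g : A)) • ω = ω)).card
        = ∑ ω : Ω, (Finset.univ.filter (fun g : G => (x * (g : A)) • ω = ω)).card := by
      simp_rw [Finset.card_filter]
      exact Finset.sum_comm
    apply Nat.eq_of_mul_eq_mul_right hΩpos
    rw [swap, Finset.sum_mul]
    simp_rw [step1]
    rw [Finset.sum_const, Finset.card_univ, smul_eq_mul, mul_comm]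
  -- derangements and non-derangements within G
  set D : Finset G := Finset.univ.filter (fun g : G => ∀ ω : Ω, (x * (g : A)) • ω ≠ ω) with hD
  set ND : Finset G := Finset.univ.filter (fun g : G => ¬ ∀ ω : Ω, (x * (g : A)) • ω ≠ ω)
    with hND
  have hsplit : D.card + ND.card = Fintype.card G := by
    rw [hD, hND, ← Finset.card_univ]
    exact Finset.card_filter_add_card_filter_not _
  -- non-derangements contribute at least s each
  have step3 : s * ND.card ≤ Fintype.card G := by
    rw [← step2]
    calc s * ND.card = ND.card • s := by rw [smul_eq_mul, mul_comm]
    _ ≤ ∑ g ∈ ND, (Finset.univ.filter (fun ω : Ω => (x * (g : A)) • ω = ω)).card := by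
        apply Finset.card_nsmul_le_sum
        intro g hg
        rw [hND, Finset.mem_filter] at hg
        rcases hfix (g : A) g.2 with h | h
        · exact absurd h hg.2
        · calc s ≤ Set.ncard {ω : Ω | (x * (g : A)) • ω = ω} := h
          _ = _ := by
            rw [Set.ncard_eq_toFinset_card']
            congr 1
            ext ω
            simp
    _ ≤ _ := Finset.sum_le_sum_of_subset (Finset.subset_univ ND)
  -- the statement's set has cardinality D.card
  have hDcard : Set.ncard {a : A | x⁻¹ * a ∈ G ∧ ∀ ω : Ω, a • ω ≠ ω} = D.card := by
    rw [Set.ncard_eq_toFinset_card']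
    have himg : {a : A | x⁻¹ * a ∈ G ∧ ∀ ω : Ω, a • ω ≠ ω}.toFinset
        = D.image (fun g : G => x * (g : A)) := by
      ext a
      simp only [Set.mem_toFinset, Set.mem_setOf_eq, Finset.mem_image, hD,
        Finset.mem_filter, Finset.mem_univ, true_and]
      constructor
      · rintro ⟨h1, h2⟩
        refine ⟨⟨x⁻¹ * a, h1⟩, fun ω => ?_, by simp⟩
        simpa [mul_assoc] using h2 ω
      · rintro ⟨g, hgder, rfl⟩
        refine ⟨by simpa using g.2, hgder⟩
    rw [himg]
    apply Finset.card_image_of_injective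
    intro g h hgh
    apply Subtype.ext
    exact mul_left_cancel hgh
  have hGcard : (Nat.card G : ℚ) = (Fintype.card G : ℚ) := by
    rw [Nat.card_eq_fintype_card]
  have hGpos : 0 < Fintype.card G := Fintype.card_pos
  have hNDle : (ND.card : ℕ) = Fintype.card G - D.card := by omega
  have key : s * (Fintype.card G - D.card) ≤ Fintype.card G := by
    rw [← hNDle]; exact step3
  have hDle : D.card ≤ Fintype.card G := by omega
  constructor
  · rw [hDcard, hGcard]
    have hsQ : (0:ℚ) < s := by positivity
    have hnQ : (0:ℚ) < (Fintype.card G : ℚ) := by exact_mod_cast hGpos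
    rw [sub_le_iff_le_add, div_add_div _ _ (ne_of_gt hnQ) (ne_of_gt hsQ),
      le_div_iff₀ (by positivity)]
    have keyQ : (s : ℚ) * ((Fintype.card G : ℚ) - D.card) ≤ (Fintype.card G : ℚ) := by
      have := key
      have : (s : ℚ) * ((Fintype.card G : ℚ) - (D.card : ℚ)) ≤ (Fintype.card G : ℚ) := by
        rw [← Nat.cast_sub hDle]
        exact_mod_cast key
      exact this
    ring_nf
    nlinarith
  · have : (1:ℚ)/s ≤ 1/2 := by
      apply one_div_le_one_div_of_le
      · norm_num
      · exact_mod_cast hs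
    linarith
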